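/- Let F₁ : ℕ → ℂ and a : ℕ → ℂ be bounded functions and let F₂ be a compactly supported continuous function on ℝ. Set ψ(n) = (Ω(n) − log log N)/√(log log N). Then for any fixed integer m ∈ ℕ, (1/N) ∑_{n=1}^{N} F₁(P⁺(mn)) F₂(ψ(mn)) a(n) = (1/N) ∑_{n=1}^{N} F₁(P⁺(n)) F₂(ψ(n)) a(n) + o(1) as N→∞. -/

import Mathlib

open Filter

/-- `P⁺(n)`: the largest prime factor of `n`, with `P⁺(0) = P⁺(1) = 1`. -/
def Pplus (n : ℕ) : ℕ := if n ≤ 1 then 1 else n.primeFactors.sup id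


lemma Pplus_eq_max (n : ℕ) (hn : n ≠ 0) : Pplus n = max 1 (n.primeFactors.sup id) := by
  unfold Pplus
  rcases Nat.lt_or_ge n 2 with h | h
  · interval_cases n <;> simp
  · rw [if_neg (by omega)]
    have : 2 ≤ n.primeFactors.sup id := by
      obtain ⟨p, pp, hp⟩ := Nat.exists_prime_and_dvd (by omega : n ≠ 1)
      exact le_trans pp.two_le (Finset.le_sup (f := id) (Nat.mem_primeFactors.2 ⟨pp, hp, hn⟩))
    omega

lemma Pplus_mul (m n : ℕ) (hm : m ≠ 0) (hn : n ≠ 0) :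
    Pplus (m * n) = max (Pplus m) (Pplus n) := by
  rw [Pplus_eq_max _ (Nat.mul_ne_zero hm hn), Pplus_eq_max _ hm, Pplus_eq_max _ hn,
    Nat.primeFactors_mul hm hn, Finset.sup_union]
  omega

lemma mem_primeFactors_le_Pplus {n p : ℕ} (hp : p ∈ n.primeFactors) : p ≤ Pplus n := by
  have hn : n ≠ 0 := (Nat.mem_primeFactors.1 hp).2.2
  rw [Pplus_eq_max _ hn]
  exact le_trans (Finset.le_sup (f := id) hp) (le_max_right _ _)

lemma Omega_mul (m n : ℕ) (hm : m ≠ 0) (hn : n ≠ 0) :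
    (m * n).primeFactorsList.length = m.primeFactorsList.length + n.primeFactorsList.length := by
  have := (Nat.perm_primeFactorsList_mul hm hn).length_eq
  simpa using this

lemma smooth_card_le (B N : ℕ) (hN : N ≠ 0) :
    ((Finset.Icc 1 N).filter (fun n => Pplus n < B)).card ≤ (Nat.log 2 N + 1) ^ B := by
  classical
  set L := Nat.log 2 N with hL
  have hbound : ∀ n ∈ (Finset.Icc 1 N).filter (fun n => Pplus n < B),
      ∀ p : ℕ, n.factorization p < L + 1 := by
    intro n hn p
    simp only [Finset.mem_filter, Finset.mem_Icc] at hn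
    by_cases hp : p.Prime
    · have hne : n ≠ 0 := by omega
      have h1 : p ^ n.factorization p ≤ n := Nat.ordProj_le p hne
      have h2 : 2 ^ n.factorization p ≤ N :=
        le_trans (le_trans (Nat.pow_le_pow_left hp.two_le _) h1) hn.1.2
      have := (Nat.le_log_iff_pow_le one_lt_two hN).2 h2
      omega
    · rw [Nat.factorization_eq_zero_of_not_prime _ hp]; omega
  have := Finset.card_le_card_of_injOn
    (f := fun n : ℕ => fun i : Fin B => (⟨min (n.factorization i) L, by omega⟩ : Fin (L+1)))
    (s := (Finset.Icc 1 N).filter (fun n => Pplus n < B))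
    (t := Finset.univ)
    (fun n _ => Finset.mem_univ _)
    (by
      intro n₁ h₁' n₂ h₂' hf
      have h₁ := Finset.mem_coe.1 h₁'
      have h₂ := Finset.mem_coe.1 h₂'
      obtain ⟨hn₁, hP₁⟩ := Finset.mem_filter.1 h₁
      obtain ⟨hn₂, hP₂⟩ := Finset.mem_filter.1 h₂
      rw [Finset.mem_Icc] at hn₁ hn₂
      have hfac : n₁.factorization = n₂.factorization := by
        ext p
        by_cases hpB : p < B
        · have := congrFun hf ⟨p, hpB⟩
          have h1 := hbound n₁ h₁ p
          have h2 := hbound n₂ h₂ p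
          simp only [Fin.mk.injEq] at this
          omega
        · have z1 : n₁.factorization p = 0 := by
            rw [← Finsupp.notMem_support_iff, Nat.support_factorization]
            intro hmem
            have := mem_primeFactors_le_Pplus hmem
            omega
          have z2 : n₂.factorization p = 0 := by
            rw [← Finsupp.notMem_support_iff, Nat.support_factorization]
            intro hmem
            have := mem_primeFactors_le_Pplus hmem
            omega
          rw [z1, z2]
      exact Nat.factorization_inj (Set.mem_setOf_eq ▸ by omega) (Set.mem_setOf_eq ▸ by omega) hfac)
  simpa using this

lemma smooth_density (B : ℕ) :
    Tendsto (fun N : ℕ =>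
      (((Finset.Icc 1 N).filter (fun n => Pplus n < B)).card : ℝ) / N) atTop (nhds 0) := by
  set c : ℝ := 1 / Real.log 2 + 1 with hc
  have hc0 : 0 < c := by positivity
  have hlim : Tendsto (fun N : ℕ => c ^ B * (Real.log N ^ B / (1 * (N : ℝ) + 0)))
      atTop (nhds 0) := by
    have := (Real.tendsto_pow_log_div_mul_add_atTop 1 0 B one_ne_zero).comp
      tendsto_natCast_atTop_atTop (f := fun N : ℕ => (N : ℝ))
    simpa using this.const_mul (c ^ B)
  refine squeeze_zero' ?_ ?_ hlim
  · filter_upwards [eventually_ge_atTop 1] with N hN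
    positivity
  · filter_upwards [eventually_ge_atTop 3] with N hN
    have hN0 : (0 : ℝ) < N := by positivity
    have hlog1 : (1 : ℝ) ≤ Real.log N := by
      rw [← Real.log_exp 1]
      refine Real.log_le_log (Real.exp_pos 1) (le_trans Real.exp_one_lt_d9.le ?_)
      have : (3 : ℝ) ≤ N := by exact_mod_cast hN
      linarith
    have hL : ((Nat.log 2 N : ℝ) + 1) ≤ c * Real.log N := by
      have h2 : (2 : ℝ) ^ (Nat.log 2 N) ≤ N := by
        exact_mod_cast Nat.pow_log_le_self 2 (by omega)
      have := Real.log_le_log (by positivity) h2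
      rw [Real.log_pow] at this
      have hlog2 : (0 : ℝ) < Real.log 2 := Real.log_pos one_lt_two
      have : (Nat.log 2 N : ℝ) ≤ Real.log N / Real.log 2 := by
        rw [le_div_iff₀ hlog2]; linarith
      calc ((Nat.log 2 N : ℝ) + 1) ≤ Real.log N / Real.log 2 + Real.log N := by linarith
        _ = c * Real.log N := by ring
    have hcard : (((Finset.Icc 1 N).filter (fun n => Pplus n < B)).card : ℝ)
        ≤ ((Nat.log 2 N : ℝ) + 1) ^ B := by
      have := smooth_card_le B N (by omega)
      exact_mod_cast this
    have hpow : ((Nat.log 2 N : ℝ) + 1) ^ B ≤ (c * Real.log N) ^ B :=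
      pow_le_pow_left₀ (by positivity) hL B
    rw [div_le_iff₀ hN0]
    calc (((Finset.Icc 1 N).filter (fun n => Pplus n < B)).card : ℝ)
        ≤ (c * Real.log N) ^ B := le_trans hcard hpow
      _ = c ^ B * Real.log N ^ B := mul_pow c _ B
      _ = c ^ B * (Real.log N ^ B / (1 * N + 0)) * N := by field_simp; ring

lemma sqrt_tendsto_atTop : Tendsto Real.sqrt atTop atTop := by
  refine tendsto_atTop_atTop.2 (fun b => ⟨(max b 0) ^ 2, fun x hx => ?_⟩)
  calc b ≤ max b 0 := le_max_left _ _
    _ = Real.sqrt ((max b 0) ^ 2) := (Real.sqrt_sq (le_max_right _ _)).symm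
    _ ≤ Real.sqrt x := Real.sqrt_le_sqrt hx

theorem stmt_10 (F₁ : ℕ → ℂ) (hF₁ : ∃ C, ∀ n, ‖F₁ n‖ ≤ C)
    (a : ℕ → ℂ) (ha : ∃ C, ∀ n, ‖a n‖ ≤ C)
    (F₂ : ℝ → ℝ) (hF₂_cont : Continuous F₂) (hF₂_supp : HasCompactSupport F₂)
    (m : ℕ) (hm : 0 < m) :
    Tendsto (fun N : ℕ =>
        (N : ℂ)⁻¹ * (∑ n ∈ Finset.Icc 1 N,
            F₁ (Pplus (m * n)) *
              (F₂ ((((m * n).primeFactorsList.length : ℝ) - Real.log (Real.log N)) /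
                Real.sqrt (Real.log (Real.log N))) : ℂ) * a n) -
        (N : ℂ)⁻¹ * (∑ n ∈ Finset.Icc 1 N,
            F₁ (Pplus n) *
              (F₂ (((n.primeFactorsList.length : ℝ) - Real.log (Real.log N)) /
                Real.sqrt (Real.log (Real.log N))) : ℂ) * a n))
      atTop (nhds 0) := by
  obtain ⟨C₁', hC₁'⟩ := hF₁
  obtain ⟨Ca', hCa'⟩ := ha
  set C₁ : ℝ := max C₁' 1 with hC₁def
  set Ca : ℝ := max Ca' 1 with hCadef
  have hC₁ : ∀ n, ‖F₁ n‖ ≤ C₁ := fun n => le_trans (hC₁' n) (le_max_left _ _)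
  have hCa : ∀ n, ‖a n‖ ≤ Ca := fun n => le_trans (hCa' n) (le_max_left _ _)
  have hC₁pos : (0 : ℝ) < C₁ := lt_of_lt_of_le one_pos (le_max_right _ _)
  have hCapos : (0 : ℝ) < Ca := lt_of_lt_of_le one_pos (le_max_right _ _)
  obtain ⟨M₂', hM₂'⟩ := hF₂_supp.exists_bound_of_continuous hF₂_cont
  set M₂ : ℝ := max M₂' 1 with hM₂def
  have hM₂ : ∀ x, ‖F₂ x‖ ≤ M₂ := fun x => le_trans (hM₂' x) (le_max_left _ _)
  have hM₂pos : (0 : ℝ) < M₂ := lt_of_lt_of_le one_pos (le_max_right _ _)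
  have hUC : UniformContinuous F₂ :=
    hF₂_supp.uniformContinuous_of_continuous hF₂_cont
  rw [NormedAddCommGroup.tendsto_nhds_zero]
  intro ε hε
  set ε' : ℝ := ε / (4 * C₁ * Ca) with hε'def
  have hε' : 0 < ε' := by positivity
  obtain ⟨δ, hδpos, hδ⟩ := Metric.uniformContinuous_iff.1 hUC ε' hε'
  set Bc : ℝ := 2 * C₁ * M₂ * Ca with hBcdef
  have hBcpos : 0 < Bc := by positivity
  set ε'' : ℝ := ε / (4 * Bc) with hε''def
  have hε''pos : 0 < ε'' := by positivity
  set B := Pplus m with hBdef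
  have hsq : Tendsto (fun N : ℕ => Real.sqrt (Real.log (Real.log N))) atTop atTop :=
    sqrt_tendsto_atTop.comp (Real.tendsto_log_atTop.comp
      (Real.tendsto_log_atTop.comp tendsto_natCast_atTop_atTop))
  set K : ℝ := max ((m.primeFactorsList.length : ℝ) / δ) 0 with hKdef
  filter_upwards [hsq.eventually_gt_atTop K,
    (smooth_density B).eventually (gt_mem_nhds hε''pos),
    eventually_ge_atTop 1] with N hq hsm hN1
  set q : ℝ := Real.sqrt (Real.log (Real.log N)) with hqdef
  have hq0 : 0 < q := lt_of_le_of_lt (le_max_right _ _) hq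
  set s : ℝ := Real.log (Real.log N) with hsdef
  have hdist : ∀ n : ℕ, 1 ≤ n →
      dist ((((m * n).primeFactorsList.length : ℝ) - s) / q)
        (((n.primeFactorsList.length : ℝ) - s) / q) < δ := by
    intro n hn
    have hOm : (m * n).primeFactorsList.length
        = m.primeFactorsList.length + n.primeFactorsList.length :=
      Omega_mul m n (by omega) (by omega)
    rw [Real.dist_eq]
    have : (((m * n).primeFactorsList.length : ℝ) - s) / q
        - (((n.primeFactorsList.length : ℝ) - s) / q)
        = (m.primeFactorsList.length : ℝ) / q := by
      rw [hOm]; push_cast; field_simp; ring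
    rw [this, abs_of_nonneg (by positivity)]
    rw [div_lt_iff₀ hq0]
    have hKq : (m.primeFactorsList.length : ℝ) / δ < q :=
      lt_of_le_of_lt (le_max_left _ _) hq
    rw [div_lt_iff₀ hδpos] at hKq
    linarith
  -- per-term bound
  have key : ∀ n ∈ Finset.Icc 1 N,
      ‖F₁ (Pplus (m * n)) *
          (F₂ ((((m * n).primeFactorsList.length : ℝ) - s) / q) : ℂ) * a n -
        F₁ (Pplus n) *
          (F₂ (((n.primeFactorsList.length : ℝ) - s) / q) : ℂ) * a n‖
      ≤ ε / 4 + (if Pplus n < B then Bc else 0) := by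
    intro n hn
    rw [Finset.mem_Icc] at hn
    set x : ℝ := (((m * n).primeFactorsList.length : ℝ) - s) / q
    set y : ℝ := ((n.primeFactorsList.length : ℝ) - s) / q
    have hF2d : ‖F₂ x - F₂ y‖ < ε' := by
      rw [Real.norm_eq_abs, ← Real.dist_eq]
      exact hδ (hdist n hn.1)
    have hsplit : F₁ (Pplus (m * n)) * (F₂ x : ℂ) * a n - F₁ (Pplus n) * (F₂ y : ℂ) * a n
        = F₁ (Pplus (m * n)) * ((F₂ x - F₂ y : ℝ) : ℂ) * a n
          + (F₁ (Pplus (m * n)) - F₁ (Pplus n)) * (F₂ y : ℂ) * a n := by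
      push_cast; ring
    rw [hsplit]
    have h1 : ‖F₁ (Pplus (m * n)) * ((F₂ x - F₂ y : ℝ) : ℂ) * a n‖ ≤ ε / 4 := by
      rw [norm_mul, norm_mul, Complex.norm_real]
      calc ‖F₁ (Pplus (m * n))‖ * ‖F₂ x - F₂ y‖ * ‖a n‖
          ≤ C₁ * ε' * Ca := by
            gcongr ?_ * ?_ * ?_
            · exact hC₁ _
            · exact hCa _
        _ = ε / 4 := by rw [hε'def]; field_simp
    rcases lt_or_ge (Pplus n) B with hlt | hle
    · rw [if_pos hlt]
      refine le_trans (norm_add_le _ _) (add_le_add h1 ?_)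
      rw [norm_mul, norm_mul, Complex.norm_real]
      calc ‖F₁ (Pplus (m * n)) - F₁ (Pplus n)‖ * ‖F₂ y‖ * ‖a n‖
          ≤ (C₁ + C₁) * M₂ * Ca := by
            gcongr
            · exact le_trans (norm_sub_le _ _) (add_le_add (hC₁ _) (hC₁ _))
            · exact hM₂ _
            · exact hCa _
        _ = Bc := by rw [hBcdef]; ring
    · rw [if_neg (not_lt.2 hle)]
      have : Pplus (m * n) = Pplus n := by
        rw [Pplus_mul m n (by omega) (by omega)]
        exact max_eq_right hle
      rw [this] at h1 ⊢
      rw [sub_self, zero_mul, zero_mul, add_zero, add_zero]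
      exact h1
  rw [← mul_sub, ← Finset.sum_sub_distrib]
  have hNpos : (0 : ℝ) < N := by exact_mod_cast Nat.lt_of_lt_of_le Nat.zero_lt_one hN1
  have hstep := le_trans (norm_sum_le (Finset.Icc 1 N) _) (Finset.sum_le_sum key)
  have hsum_eq : ∑ n ∈ Finset.Icc 1 N, (ε / 4 + (if Pplus n < B then Bc else 0))
      = (N : ℝ) * (ε / 4)
        + (((Finset.Icc 1 N).filter (fun n => Pplus n < B)).card : ℝ) * Bc := by
    rw [Finset.sum_add_distrib, ← Finset.sum_filter, Finset.sum_const, Finset.sum_const,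
      Nat.card_Icc, nsmul_eq_mul, nsmul_eq_mul]
    have : N + 1 - 1 = N := by omega
    rw [this]
  rw [norm_mul, norm_inv, Complex.norm_natCast]
  refine lt_of_le_of_lt
    (mul_le_mul_of_nonneg_left (hstep.trans (le_of_eq hsum_eq)) (inv_nonneg.2 hNpos.le)) ?_
  have heq : (N : ℝ)⁻¹ * ((N : ℝ) * (ε / 4)
      + (((Finset.Icc 1 N).filter (fun n => Pplus n < B)).card : ℝ) * Bc)
      = ε / 4 + ((((Finset.Icc 1 N).filter (fun n => Pplus n < B)).card : ℝ) / N) * Bc := by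
    field_simp
  rw [heq]
  have h2 : ((((Finset.Icc 1 N).filter (fun n => Pplus n < B)).card : ℝ) / N) * Bc
      < ε'' * Bc := mul_lt_mul_of_pos_right hsm hBcpos
  have h3 : ε'' * Bc = ε / 4 := by
    rw [hε''def]; field_simp
  linarith
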